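/- (Theorem 4.5) Let γ : ℝ → ℝ⁴ be smooth and let U₁, U₂, U₃, U₄ : ℝ → ℝ⁴ be smooth maps forming, at every σ, a linearly independent family, with continuous functions 𝒦̄₁, 𝒦̄₂, 𝒦̄₃ : ℝ → ℝ, such that γ' = U₁ and the timelike equiform Frenet equations hold: U₁' = 𝒦̄₁U₁ + U₂, U₂' = U₁ + 𝒦̄₁U₂ + 𝒦̄₂U₃, U₃' = -𝒦̄₂U₂ + 𝒦̄₁U₃ + 𝒦̄₃U₄, U₄' = -𝒦̄₃U₃ + 𝒦̄₁U₄. Assume 𝒦̄₁(σ) ≠ 0 and 𝒦̄₂(σ) ≠ 0 for all σ. Then 𝒦̄₃ ≡ 0 if and only if γ lies fully in a hyperplane of E₁⁴, i.e. there exists a nonzero vector q ∈ ℝ⁴ such that B(γ(σ) - γ(0), q) = 0 for all σ. -/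

import Mathlib

noncomputable section

/-- The Minkowski bilinear form on ℝ⁴ with signature (-,+,+,+). -/
def B (x y : Fin 4 → ℝ) : ℝ :=
  -(x 0 * y 0) + x 1 * y 1 + x 2 * y 2 + x 3 * y 3

namespace TimelikeAux

lemma B_add_left (x y z : Fin 4 → ℝ) : B (x + y) z = B x z + B y z := by
  simp only [B, Pi.add_apply]; ring

lemma B_smul_left (c : ℝ) (x z : Fin 4 → ℝ) : B (c • x) z = c * B x z := by
  simp only [B, Pi.smul_apply, smul_eq_mul]; ring

lemma B_sub_left (x y z : Fin 4 → ℝ) : B (x - y) z = B x z - B y z := by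
  simp only [B, Pi.sub_apply]; ring

lemma B_neg_left (x z : Fin 4 → ℝ) : B (-x) z = -B x z := by
  simp only [B, Pi.neg_apply]; ring

lemma B_zero_left (z : Fin 4 → ℝ) : B 0 z = 0 := by
  simp [B]

lemma hasDerivAt_B {U : ℝ → Fin 4 → ℝ} (hU : ContDiff ℝ (⊤ : ℕ∞) U) (q : Fin 4 → ℝ) (t : ℝ) :
    HasDerivAt (fun s => B (U s) q) (B (deriv U t) q) t := by
  have hd : HasDerivAt U (deriv U t) t := (hU.differentiable (by norm_num) t).hasDerivAt
  have h := hasDerivAt_pi.1 hd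
  show HasDerivAt (fun s => -(U s 0 * q 0) + U s 1 * q 1 + U s 2 * q 2 + U s 3 * q 3)
    (-(deriv U t 0 * q 0) + deriv U t 1 * q 1 + deriv U t 2 * q 2 + deriv U t 3 * q 3) t
  exact ((((h 0).mul_const (q 0)).neg.add ((h 1).mul_const (q 1))).add
      ((h 2).mul_const (q 2))).add ((h 3).mul_const (q 3))

/-- If `q` pairs to zero with four linearly independent vectors, it is zero. -/
lemma q_eq_zero {v₁ v₂ v₃ v₄ q : Fin 4 → ℝ}
    (h : LinearIndependent ℝ ![v₁, v₂, v₃, v₄])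
    (h1 : B v₁ q = 0) (h2 : B v₂ q = 0) (h3 : B v₃ q = 0) (h4 : B v₄ q = 0) : q = 0 := by
  have hspan : Submodule.span ℝ (Set.range ![v₁, v₂, v₃, v₄]) = ⊤ :=
    h.span_eq_top_of_card_eq_finrank (by simp [Module.finrank_fin_fun])
  have hall : ∀ x : Fin 4 → ℝ, B x q = 0 := by
    intro x
    have hx : x ∈ Submodule.span ℝ (Set.range ![v₁, v₂, v₃, v₄]) := hspan ▸ Submodule.mem_top
    induction hx using Submodule.span_induction with
    | mem y hy =>
        obtain ⟨i, rfl⟩ := hy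
        fin_cases i
        · simpa using h1
        · simpa using h2
        · simpa using h3
        · simpa using h4
    | zero => exact B_zero_left q
    | add a b _ _ ha hb => rw [B_add_left, ha, hb]; ring
    | smul c a _ ha => rw [B_smul_left, ha]; ring
  funext i
  fin_cases i
  · have := hall ![1, 0, 0, 0]; simp [B] at this; simpa using this
  · have := hall ![0, 1, 0, 0]; simp [B] at this; simpa using this
  · have := hall ![0, 0, 1, 0]; simp [B] at this; simpa using this
  · have := hall ![0, 0, 0, 1]; simp [B] at this; simpa using this

/-- There exists a nonzero `q` pairing to zero with any three given vectors. -/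
lemma exists_q (v₁ v₂ v₃ : Fin 4 → ℝ) :
    ∃ q : Fin 4 → ℝ, q ≠ 0 ∧ B v₁ q = 0 ∧ B v₂ q = 0 ∧ B v₃ q = 0 := by
  let L : (Fin 4 → ℝ) →ₗ[ℝ] (Fin 3 → ℝ) :=
    { toFun := fun q => ![B v₁ q, B v₂ q, B v₃ q]
      map_add' := by
        intro x y; funext i; fin_cases i <;>
          (simp [B, Pi.add_apply]; try ring)
      map_smul' := by
        intro c x; funext i; fin_cases i <;>
          (simp [B, Pi.smul_apply, smul_eq_mul]; try ring) }
  have hker : LinearMap.ker L ≠ ⊥ := by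
    intro hker
    have hinj : Function.Injective L := LinearMap.ker_eq_bot.mp hker
    have := LinearMap.finrank_le_finrank_of_injective hinj
    simp [Module.finrank_fin_fun] at this
  obtain ⟨x, hxmem, hx0⟩ := (LinearMap.ker L).ne_bot_iff.mp hker
  have hLx : L x = 0 := LinearMap.mem_ker.mp hxmem
  refine ⟨x, hx0, ?_, ?_, ?_⟩
  · have := congrFun hLx 0; simpa [L] using this
  · have := congrFun hLx 1; simpa [L] using this
  · have := congrFun hLx 2; simpa [L] using this

def l2 : (Fin 3 → ℝ) →ₗ[ℝ] (Fin 3 → ℝ) where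
  toFun y := ![0, y 2, -(y 1)]
  map_add' x y := by funext i; fin_cases i <;> simp [Pi.add_apply] <;> ring
  map_smul' c x := by funext i; fin_cases i <;> simp [Pi.smul_apply, smul_eq_mul] <;> ring

def l3 : (Fin 3 → ℝ) →ₗ[ℝ] (Fin 3 → ℝ) where
  toFun y := ![y 1, y 0, 0]
  map_add' x y := by funext i; fin_cases i <;> simp [Pi.add_apply] <;> ring
  map_smul' c x := by funext i; fin_cases i <;> simp [Pi.smul_apply, smul_eq_mul] <;> ring

def A (k₁ k₂ : ℝ) : (Fin 3 → ℝ) →L[ℝ] (Fin 3 → ℝ) :=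
  k₁ • ContinuousLinearMap.id ℝ (Fin 3 → ℝ) + k₂ • LinearMap.toContinuousLinearMap l2 +
    LinearMap.toContinuousLinearMap l3

lemma A_apply (k₁ k₂ : ℝ) (y : Fin 3 → ℝ) :
    A k₁ k₂ y = k₁ • y + k₂ • ![0, y 2, -(y 1)] + ![y 1, y 0, 0] := by
  simp [A, l2, l3, ContinuousLinearMap.add_apply, ContinuousLinearMap.smul_apply,
    LinearMap.coe_toContinuousLinearMap']

lemma A_continuous {K₁ K₂ : ℝ → ℝ} (h1 : Continuous K₁) (h2 : Continuous K₂) :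
    Continuous (fun t => A (K₁ t) (K₂ t)) := by
  unfold A
  exact ((h1.smul continuous_const).add (h2.smul continuous_const)).add continuous_const

end TimelikeAux

open TimelikeAux in
theorem timelike_K₃_zero_iff_hyperplanar
    (γ U₁ U₂ U₃ U₄ : ℝ → Fin 4 → ℝ) (K₁ K₂ K₃ : ℝ → ℝ)
    (hγ : ContDiff ℝ (⊤ : ℕ∞) γ)
    (hU₁ : ContDiff ℝ (⊤ : ℕ∞) U₁) (hU₂ : ContDiff ℝ (⊤ : ℕ∞) U₂)
    (hU₃ : ContDiff ℝ (⊤ : ℕ∞) U₃) (hU₄ : ContDiff ℝ (⊤ : ℕ∞) U₄)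
    (hindep : ∀ σ, LinearIndependent ℝ ![U₁ σ, U₂ σ, U₃ σ, U₄ σ])
    (hK₁c : Continuous K₁) (hK₂c : Continuous K₂) (hK₃c : Continuous K₃)
    (hγ' : ∀ σ, deriv γ σ = U₁ σ)
    (hU₁' : ∀ σ, deriv U₁ σ = K₁ σ • U₁ σ + U₂ σ)
    (hU₂' : ∀ σ, deriv U₂ σ = U₁ σ + K₁ σ • U₂ σ + K₂ σ • U₃ σ)
    (hU₃' : ∀ σ, deriv U₃ σ = -(K₂ σ • U₂ σ) + K₁ σ • U₃ σ + K₃ σ • U₄ σ)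
    (hU₄' : ∀ σ, deriv U₄ σ = -(K₃ σ • U₃ σ) + K₁ σ • U₄ σ)
    (hK₁ne : ∀ σ, K₁ σ ≠ 0) (hK₂ne : ∀ σ, K₂ σ ≠ 0) :
    (∀ σ, K₃ σ = 0) ↔
      ∃ q : Fin 4 → ℝ, q ≠ 0 ∧ ∀ σ, B (γ σ - γ 0) q = 0 := by
  constructor
  · -- forward direction
    intro hK₃
    obtain ⟨q, hq0, h1, h2, h3⟩ := exists_q (U₁ 0) (U₂ 0) (U₃ 0)
    refine ⟨q, hq0, ?_⟩
    set F : ℝ → Fin 3 → ℝ := fun t => ![B (U₁ t) q, B (U₂ t) q, B (U₃ t) q] with hF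
    have hFder' : ∀ t, HasDerivAt F
        (![B (deriv U₁ t) q, B (deriv U₂ t) q, B (deriv U₃ t) q]) t := by
      intro t
      rw [hasDerivAt_pi]
      intro i
      fin_cases i
      · simpa [hF] using hasDerivAt_B hU₁ q t
      · simpa [hF] using hasDerivAt_B hU₂ q t
      · simpa [hF] using hasDerivAt_B hU₃ q t
    have hD : ∀ t, (![B (deriv U₁ t) q, B (deriv U₂ t) q, B (deriv U₃ t) q] : Fin 3 → ℝ)
        = A (K₁ t) (K₂ t) (F t) := by
      intro t
      funext i
      rw [A_apply]
      fin_cases i <;>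
        simp [hF, hU₁' t, hU₂' t, hU₃' t, hK₃ t, B_add_left, B_smul_left, B_neg_left,
          B_zero_left] <;> ring
    have hFder : ∀ t, HasDerivAt F (A (K₁ t) (K₂ t) (F t)) t := by
      intro t; rw [← hD t]; exact hFder' t
    have hFdiff : Differentiable ℝ F := fun t => (hFder t).differentiableAt
    have hFc : Continuous F := hFdiff.continuous
    have hF0 : ∀ σ, F σ = 0 := by
      intro σ₀
      set b : ℝ := |σ₀| + 1 with hb
      set a : ℝ := -b with ha
      have hab : a < b := by
        have := abs_nonneg σ₀; simp only [ha, hb]; linarith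
      obtain ⟨C, hC⟩ := (isCompact_Icc (a := a) (b := b)).exists_bound_of_continuousOn
        (A_continuous hK₁c hK₂c).continuousOn
      set clamp : ℝ → ℝ := fun t => max a (min b t) with hclampdef
      have hclamp : ∀ t, clamp t ∈ Set.Icc a b := fun t =>
        ⟨le_max_left _ _, max_le hab.le (min_le_left _ _)⟩
      set v : ℝ → (Fin 3 → ℝ) → (Fin 3 → ℝ) :=
        fun t y => A (K₁ (clamp t)) (K₂ (clamp t)) y with hvdef
      have hv : ∀ t, LipschitzOnWith C.toNNReal (v t) Set.univ := by
        intro t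
        apply LipschitzWith.lipschitzOnWith
        apply (A (K₁ (clamp t)) (K₂ (clamp t))).lipschitz.weaken
        refine NNReal.coe_le_coe.1 ?_
        rw [coe_nnnorm, Real.coe_toNNReal']
        exact (hC _ (hclamp t)).trans (le_max_left _ _)
      have ht0 : (0 : ℝ) ∈ Set.Ioo a b := by
        have := abs_nonneg σ₀
        constructor <;> simp only [ha, hb] <;> linarith
      have hf' : ∀ t ∈ Set.Ioo a b, HasDerivAt F (v t (F t)) t := by
        intro t ht
        have hcl : clamp t = t := by
          simp only [hclampdef]
          rw [min_eq_right ht.2.le, max_eq_right ht.1.le]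
        rw [hvdef]
        simp only [hcl]
        exact hFder t
      have hg' : ∀ t ∈ Set.Ioo a b,
          HasDerivAt (fun _ : ℝ => (0 : Fin 3 → ℝ)) (v t ((fun _ : ℝ => (0 : Fin 3 → ℝ)) t)) t := by
        intro t ht
        have : v t 0 = 0 := map_zero (A (K₁ (clamp t)) (K₂ (clamp t)))
        rw [this]
        exact hasDerivAt_const t 0
      have heq : F 0 = (fun _ : ℝ => (0 : Fin 3 → ℝ)) 0 := by
        funext i; fin_cases i <;> simp [hF, h1, h2, h3]
      have key := ODE_solution_unique_of_mem_Icc (fun t _ => hv t) ht0 hFc.continuousOn hf'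
        (fun _ _ => trivial) continuousOn_const hg' (fun _ _ => trivial) heq
      have hmem : σ₀ ∈ Set.Icc a b := by
        have h1' := le_abs_self σ₀
        have h2' := neg_abs_le σ₀
        constructor <;> simp only [ha, hb] <;> linarith
      exact key hmem
    have hU₁q : ∀ t, B (U₁ t) q = 0 := by
      intro t
      have := congrFun (hF0 t) 0
      simpa [hF] using this
    have hGder : ∀ t, HasDerivAt (fun s => B (γ s) q) 0 t := by
      intro t
      have h := hasDerivAt_B hγ q t
      rwa [hγ' t, hU₁q t] at h
    have hconst : ∀ t : ℝ, B (γ t) q = B (γ 0) q := by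
      intro t
      exact is_const_of_deriv_eq_zero
        (fun s => (hGder s).differentiableAt) (fun s => (hGder s).deriv) t 0
    intro σ
    rw [B_sub_left, hconst σ, sub_self]
  · -- backward direction
    rintro ⟨q, hq0, hq⟩ σ
    have h1 : ∀ t, B (U₁ t) q = 0 := by
      intro t
      have h := (hasDerivAt_B hγ q t).sub_const (B (γ 0) q)
      have he : (fun s => B (γ s) q - B (γ 0) q) = fun _ => (0 : ℝ) := by
        funext s; rw [← B_sub_left]; exact hq s
      rw [he] at h
      have h0 := h.unique (hasDerivAt_const t (0 : ℝ))
      rwa [hγ' t] at h0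
    have h2 : ∀ t, B (U₂ t) q = 0 := by
      intro t
      have h := hasDerivAt_B hU₁ q t
      have he : (fun s => B (U₁ s) q) = fun _ => (0 : ℝ) := funext h1
      rw [he] at h
      have h0 := h.unique (hasDerivAt_const t (0 : ℝ))
      rw [hU₁' t, B_add_left, B_smul_left, h1 t] at h0
      linarith
    have h3 : ∀ t, B (U₃ t) q = 0 := by
      intro t
      have h := hasDerivAt_B hU₂ q t
      have he : (fun s => B (U₂ s) q) = fun _ => (0 : ℝ) := funext h2
      rw [he] at h
      have h0 := h.unique (hasDerivAt_const t (0 : ℝ))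
      rw [hU₂' t, B_add_left, B_add_left, B_smul_left, B_smul_left, h1 t, h2 t] at h0
      have : K₂ t * B (U₃ t) q = 0 := by linarith
      exact (mul_eq_zero.mp this).resolve_left (hK₂ne t)
    have h4 : K₃ σ * B (U₄ σ) q = 0 := by
      have h := hasDerivAt_B hU₃ q σ
      have he : (fun s => B (U₃ s) q) = fun _ => (0 : ℝ) := funext h3
      rw [he] at h
      have h0 := h.unique (hasDerivAt_const σ (0 : ℝ))
      rw [hU₃' σ, B_add_left, B_add_left, B_neg_left, B_smul_left, B_smul_left, B_smul_left,
        h2 σ, h3 σ] at h0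
      linarith
    have hU₄q : B (U₄ σ) q ≠ 0 := by
      intro hcontra
      exact hq0 (q_eq_zero (hindep σ) (h1 σ) (h2 σ) (h3 σ) hcontra)
    exact (mul_eq_zero.mp h4).resolve_right hU₄q
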